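/- arXiv:2408.04618 — 3 statements merged into one kernel-verified Lean document; each statement's English description precedes it below -/
import Mathlib

section
/- Let G be a 2-connected finite simple graph, let C1 and C2 be two longest cycles in G, let A := V(C1) \ V(C2) and B := V(C2) \ V(C1), and let S ⊆ V(G) be an A–B separator. Then every longest cycle of G contains a vertex of S ∪ (V(C1) ∩ V(C2)). -/
set_option maxHeartbeats 1000000

open SimpleGraph Walk

section Helpers

variable {V : Type} {G : SimpleGraph V}

/-- A path `p : a → b` whose start appears only at the head. -/
lemma start_not_mem_tail_of_isPath {a b : V} {p : G.Walk a b} (hp : p.IsPath) :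
    a ∉ p.support.tail := by
  have h := hp.support_nodup
  rw [p.support_eq_cons] at h
  exact (List.nodup_cons.mp h).1

/-- Append two paths meeting only at the common endpoint. -/
lemma IsPath.append' {a b c : V} {p : G.Walk a b} {q : G.Walk b c}
    (hp : p.IsPath) (hq : q.IsPath)
    (hmeet : ∀ z, z ∈ p.support → z ∈ q.support → z = b) :
    (p.append q).IsPath := by
  rw [isPath_def, support_append]
  refine List.Nodup.append hp.support_nodup (hq.support_nodup.sublist (List.tail_sublist _)) ?_
  intro z hz hz'
  have hzq : z ∈ q.support := List.mem_of_mem_tail hz'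
  have := hmeet z hz hzq
  subst this
  exact start_not_mem_tail_of_isPath hq hz'

/-- In a path from `a` to `b` containing the edge `s(a,b)`, the length is 1. -/
lemma length_eq_one_of_edge_mem {a b : V} {p : G.Walk a b} (hp : p.IsPath)
    (he : s(a, b) ∈ p.edges) : p.length = 1 := by
  cases p with
  | nil => simp at he
  | cons h q =>
    rename_i w
    rw [edges_cons, List.mem_cons] at he
    rcases he with he | he
    · have hab : b = w := by
        rcases Sym2.eq_iff.mp he with ⟨-, rfl⟩ | ⟨h1, h2⟩
        · rfl
        · exact absurd h1 h.ne
      subst hab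
      have : q = Walk.nil := (isPath_iff_eq_nil (p := q)).mp hp.of_cons
      subst this; simp
    · exfalso
      have : a ∈ q.support := Walk.fst_mem_support_of_mem_edges q he
      exact ((Walk.cons_isPath_iff h q).mp hp).2 this

/-- Gluing two internally disjoint paths into a cycle. -/
lemma cycle_of_two_paths {a b : V} {p : G.Walk a b} {q : G.Walk b a}
    (hp : p.IsPath) (hq : q.IsPath) (hlp : 2 ≤ p.length) (hlq : 1 ≤ q.length)
    (hmeet : ∀ z, z ∈ p.support → z ∈ q.support → z = a ∨ z = b) :
    (p.append q).IsCycle := by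
  have hab : a ≠ b := by
    rintro rfl
    have : p = Walk.nil := (isPath_iff_eq_nil (p := p)).mp hp
    subst this; simp at hlp
  rw [isCycle_def]
  refine ⟨⟨?_⟩, ?_, ?_⟩
  · -- trail: edges nodup
    rw [edges_append]
    refine List.Nodup.append hp.isTrail.edges_nodup hq.isTrail.edges_nodup ?_
    intro e hep heq
    -- endpoints of e lie in both supports
    induction e using Sym2.inductionOn with
    | hf x y =>
      have hx : x ∈ p.support := Walk.fst_mem_support_of_mem_edges p hep
      have hy : y ∈ p.support := Walk.snd_mem_support_of_mem_edges p hep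
      have hx' : x ∈ q.support := Walk.fst_mem_support_of_mem_edges q heq
      have hy' : y ∈ q.support := Walk.snd_mem_support_of_mem_edges q heq
      have hxy : x ≠ y := (Walk.adj_of_mem_edges p hep).ne
      rcases hmeet x hx hx' with rfl | rfl <;> rcases hmeet y hy hy' with rfl | rfl
      · exact hxy rfl
      · -- e = s(a,b) ∈ p.edges, so p.length = 1, contradiction
        have := length_eq_one_of_edge_mem hp hep
        omega
      · have := length_eq_one_of_edge_mem hp (by rwa [Sym2.eq_swap] at hep)
        omega
      · exact hxy rfl
  · intro h
    have : p.length + q.length = 0 := by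
      have := congrArg Walk.length h
      rwa [length_append] at this
    omega
  · rw [tail_support_append]
    refine List.Nodup.append (hp.support_nodup.sublist (List.tail_sublist _))
      (hq.support_nodup.sublist (List.tail_sublist _)) ?_
    intro z hz hz'
    have hzp : z ∈ p.support := List.mem_of_mem_tail hz
    have hzq : z ∈ q.support := List.mem_of_mem_tail hz'
    rcases hmeet z hzp hzq with rfl | rfl
    · exact start_not_mem_tail_of_isPath hp hz
    · exact start_not_mem_tail_of_isPath hq hz'

/-- Trim a walk at the first vertex satisfying `Pr`. -/
lemma exists_prefix_first_hit {a b : V} (p : G.Walk a b) (Pr : V → Prop) (hb : Pr b) :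
    ∃ (z : V) (q : G.Walk a z), Pr z ∧ (∀ y ∈ q.support, y ≠ z → ¬ Pr y) ∧
      (∀ y ∈ q.support, y ∈ p.support) ∧ (p.IsPath → q.IsPath) := by
  induction p with
  | nil =>
    exact ⟨_, Walk.nil, hb, by simp +contextual, by simp, fun h => h⟩
  | @cons u w x h p ih =>
    by_cases hu : Pr u
    · exact ⟨u, Walk.nil, hu, by simp +contextual, by simp, fun _ => Walk.IsPath.nil⟩
    · obtain ⟨z, q, hz, hfirst, hsub, hpath⟩ := ih hb
      refine ⟨z, Walk.cons h q, hz, ?_, ?_, ?_⟩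
      · intro y hy hyz
        rw [support_cons, List.mem_cons] at hy
        rcases hy with rfl | hy
        · exact hu
        · exact hfirst y hy hyz
      · intro y hy
        rw [support_cons, List.mem_cons] at hy ⊢
        rcases hy with rfl | hy
        · exact Or.inl rfl
        · exact Or.inr (hsub y hy)
      · intro hp
        rw [Walk.cons_isPath_iff] at hp ⊢
        exact ⟨hpath hp.1, fun hc => hp.2 (hsub _ hc)⟩

/-- A path meets its `takeUntil`/`dropUntil` pieces only at the split vertex. -/
lemma takeUntil_dropUntil_inter [DecidableEq V] {a b c : V} {p : G.Walk a b} (hp : p.IsPath)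
    (h : c ∈ p.support) :
    ∀ z, z ∈ (p.takeUntil c h).support → z ∈ (p.dropUntil c h).support → z = c := by
  intro z hz hz'
  have hnd : p.support.Nodup := hp.support_nodup
  conv at hnd => rw [← Walk.take_spec p h]
  rw [support_append] at hnd
  rcases (Walk.mem_support_iff _).mp hz' with rfl | hz''
  · rfl
  · exact absurd hz'' ((List.disjoint_of_nodup_append hnd) hz)
/-- From 2-connectivity: a path between any two vertices avoiding a given third vertex. -/
lemma exists_path_avoiding [DecidableEq V] (hconn : ∀ w : V, (G.induce ({w}ᶜ : Set V)).Connected)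
    (w x y : V) (hx : x ≠ w) (hy : y ≠ w) :
    ∃ q : G.Walk x y, q.IsPath ∧ w ∉ q.support := by
  have hr : (G.induce ({w}ᶜ : Set V)).Reachable ⟨x, hx⟩ ⟨y, hy⟩ :=
    (hconn w).preconnected _ _
  obtain ⟨p⟩ := hr
  let f : G.induce ({w}ᶜ : Set V) →g G := ⟨Subtype.val, fun h => h⟩
  refine ⟨(p.map f).toPath, (p.map f).toPath.isPath, fun hw => ?_⟩
  have := Walk.support_toPath_subset (p.map f) hw
  rw [Walk.support_map, List.mem_map] at this
  obtain ⟨⟨z, hz⟩, -, hzw⟩ := this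
  exact hz (show z ∈ ({w} : Set V) from hzw)

section Arcs
variable [DecidableEq V]

/-- Arcs of a cycle: basic facts. -/
lemma cycle_arcs {a b : V} {c : G.Walk a a} (hc : c.IsCycle) (hb : b ∈ c.support)
    (hba : b ≠ a) :
    (c.takeUntil b hb).IsPath ∧ (c.dropUntil b hb).IsPath ∧
      (c.takeUntil b hb).length + (c.dropUntil b hb).length = c.length ∧
      1 ≤ (c.takeUntil b hb).length ∧ 1 ≤ (c.dropUntil b hb).length := by
  set tU := c.takeUntil b hb with htU
  set dU := c.dropUntil b hb with hdU
  have hspec : tU.append dU = c := Walk.take_spec c hb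
  have hnd : c.support.tail.Nodup := hc.2
  have htail : c.support.tail = tU.support.tail ++ dU.support.tail := by
    have h1 : c.support = tU.support ++ dU.support.tail := by
      rw [← hspec, support_append]
    have h2 : tU.support = a :: tU.support.tail := tU.support_eq_cons
    have h3 : c.support = a :: c.support.tail := c.support_eq_cons
    rw [h2] at h1
    rw [h3] at h1
    simpa using congrArg List.tail h1
  rw [htail] at hnd
  have hdisj := List.disjoint_of_nodup_append hnd
  have haD : a ∈ dU.support.tail := by
    have ha : a ∈ dU.support := dU.end_mem_support
    rw [dU.support_eq_cons, List.mem_cons] at ha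
    rcases ha with h | h
    · exact absurd h.symm hba
    · exact h
  have hbT : b ∈ tU.support.tail := by
    have h := tU.end_mem_support
    rw [tU.support_eq_cons, List.mem_cons] at h
    rcases h with h | h
    · exact absurd h hba
    · exact h
  have htUpath : tU.IsPath := by
    rw [isPath_def, tU.support_eq_cons, List.nodup_cons]
    exact ⟨fun ha => (hdisj ha) haD, (List.nodup_append.mp hnd).1⟩
  have hdUpath : dU.IsPath := by
    rw [isPath_def, dU.support_eq_cons, List.nodup_cons]
    exact ⟨fun hb' => (hdisj hbT) hb', (List.nodup_append.mp hnd).2.1⟩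
  have hlen : tU.length + dU.length = c.length := by
    conv_rhs => rw [← hspec]
    rw [length_append]
  have htl : 1 ≤ tU.length := by
    rcases Nat.eq_zero_or_pos tU.length with h | h
    · exact absurd (Walk.eq_of_length_eq_zero h) hba.symm
    · exact h
  have hdl : 1 ≤ dU.length := by
    rcases Nat.eq_zero_or_pos dU.length with h | h
    · exact absurd (Walk.eq_of_length_eq_zero h) hba
    · exact h
  exact ⟨htUpath, hdUpath, hlen, htl, hdl⟩

lemma mem_support_rotate_iff {a b z : V} (c : G.Walk a a) (hb : b ∈ c.support) :
    z ∈ (c.rotate _ hb).support ↔ z ∈ c.support := by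
  rw [Walk.rotate, mem_support_append_iff]
  conv_rhs => rw [← Walk.take_spec c hb]
  rw [mem_support_append_iff]
  exact or_comm

lemma length_rotate' {a b : V} (c : G.Walk a a) (hb : b ∈ c.support) :
    (c.rotate _ hb).length = c.length := by
  rw [Walk.rotate, length_append]
  conv_rhs => rw [← Walk.take_spec c hb]
  rw [length_append]
  exact Nat.add_comm _ _

end Arcs

/-- A 2-fan from `v` to the vertex set `T`. -/
def HasFan (G : SimpleGraph V) (T : Finset V) (v : V) : Prop :=
  ∃ x1 x2 : V, x1 ∈ T ∧ x2 ∈ T ∧ x1 ≠ x2 ∧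
    ∃ (P1 : G.Walk v x1) (P2 : G.Walk v x2), P1.IsPath ∧ P2.IsPath ∧
      (∀ z ∈ P1.support, z ∈ T → z = x1) ∧ (∀ z ∈ P2.support, z ∈ T → z = x2) ∧
      (∀ z ∈ P1.support, z ∈ P2.support → z = v)

section FanCases
variable [DecidableEq V]

lemma fan_caseA {T : Finset V} {v w y1 y2 : V} (hvT : v ∉ T) (hvw : v ≠ w)
    (hy1 : y1 ∈ T) (hy2 : y2 ∈ T) (h12 : y1 ≠ y2)
    (Q1 : G.Walk w y1) (Q2 : G.Walk w y2) (hQ1 : Q1.IsPath) (hQ2 : Q2.IsPath)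
    (hm1 : ∀ z ∈ Q1.support, z ∈ T → z = y1) (hm2 : ∀ z ∈ Q2.support, z ∈ T → z = y2)
    (hint : ∀ z ∈ Q1.support, z ∈ Q2.support → z = w)
    (hv1 : v ∈ Q1.support) : HasFan G T v := by
  set dr := Q1.dropUntil v hv1 with hdr
  set tk := Q1.takeUntil v hv1 with htk
  have htdi := takeUntil_dropUntil_inter hQ1 hv1
  have hwdr : w ∉ dr.support := fun hw =>
    hvw (htdi w tk.start_mem_support hw).symm
  have hy1tk : y1 ∉ tk.support := fun hy =>
    hvT (htdi y1 hy dr.end_mem_support ▸ hy1)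
  have P2 : G.Walk v y2 := tk.reverse.append Q2
  refine ⟨y1, y2, hy1, hy2, h12, dr, tk.reverse.append Q2, hQ1.dropUntil hv1, ?_, ?_, ?_, ?_⟩
  · refine IsPath.append' (hQ1.takeUntil hv1).reverse hQ2 ?_
    intro z hz hz'
    rw [support_reverse, List.mem_reverse] at hz
    exact hint z (Walk.support_takeUntil_subset _ hv1 hz) hz'
  · intro z hz hzT
    exact hm1 z (Walk.support_dropUntil_subset _ hv1 hz) hzT
  · intro z hz hzT
    rw [mem_support_append_iff, support_reverse, List.mem_reverse] at hz
    rcases hz with hz | hz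
    · exfalso
      have := hm1 z (Walk.support_takeUntil_subset _ hv1 hz) hzT
      subst this
      exact hy1tk hz
    · exact hm2 z hz hzT
  · intro z hz hz'
    rw [mem_support_append_iff, support_reverse, List.mem_reverse] at hz'
    rcases hz' with hz' | hz'
    · exact htdi z hz' hz
    · exfalso
      have hzw := hint z (Walk.support_dropUntil_subset _ hv1 hz) hz'
      subst hzw
      exact hwdr hz

lemma fan_caseB1 {T : Finset V} {v w z y2 : V} (hvT : v ∉ T)
    (hz : z ∈ T) (hy2 : y2 ∈ T) (hzy2 : z ≠ y2) (h : G.Adj v w)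
    (q : G.Walk v z) (hq : q.IsPath)
    (hqT : ∀ y ∈ q.support, y ∈ T → y = z)
    (Q2 : G.Walk w y2) (hQ2 : Q2.IsPath) (hm2 : ∀ y ∈ Q2.support, y ∈ T → y = y2)
    (hv2 : v ∉ Q2.support)
    (hqQ2 : ∀ y ∈ q.support, y ∈ Q2.support → y = z) : HasFan G T v := by
  have hzQ2 : z ∉ Q2.support := fun hc => hzy2 (hm2 z hc hz)
  refine ⟨z, y2, hz, hy2, hzy2, q, Walk.cons h Q2, hq, hQ2.cons hv2, hqT, ?_, ?_⟩
  · intro y hy hyT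
    rw [support_cons, List.mem_cons] at hy
    rcases hy with rfl | hy
    · exact absurd hyT hvT
    · exact hm2 y hy hyT
  · intro y hy hy'
    rw [support_cons, List.mem_cons] at hy'
    rcases hy' with rfl | hy'
    · rfl
    · exact absurd (hqQ2 y hy hy' ▸ hy') hzQ2

lemma fan_caseB2 {T : Finset V} {v w z y1 y2 : V} (hvT : v ∉ T) (hvw : v ≠ w)
    (hzT : z ∉ T) (hy1 : y1 ∈ T) (hy2 : y2 ∈ T) (h12 : y1 ≠ y2) (h : G.Adj v w)
    (q : G.Walk v z) (hq : q.IsPath) (hqw : w ∉ q.support)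
    (Q1 : G.Walk w y1) (Q2 : G.Walk w y2) (hQ1 : Q1.IsPath) (hQ2 : Q2.IsPath)
    (hm1 : ∀ y ∈ Q1.support, y ∈ T → y = y1) (hm2 : ∀ y ∈ Q2.support, y ∈ T → y = y2)
    (hint : ∀ y ∈ Q1.support, y ∈ Q2.support → y = w)
    (hv1 : v ∉ Q1.support) (hv2 : v ∉ Q2.support)
    (hzQ1 : z ∈ Q1.support)
    (hqP : ∀ y ∈ q.support, (y ∈ Q1.support ∨ y ∈ Q2.support ∨ y ∈ T) → y = z) :
    HasFan G T v := by
  set dr := Q1.dropUntil z hzQ1 with hdr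
  have htdi := takeUntil_dropUntil_inter hQ1 hzQ1
  have hzw : z ≠ w := fun hc => hqw (hc ▸ q.end_mem_support)
  have hwdr : w ∉ dr.support := fun hw => hzw (htdi w (Walk.start_mem_support _) hw).symm
  refine ⟨y1, y2, hy1, hy2, h12, q.append dr, Walk.cons h Q2, ?_, hQ2.cons hv2, ?_, ?_, ?_⟩
  · refine IsPath.append' hq (hQ1.dropUntil hzQ1) ?_
    intro y hy hy'
    exact hqP y hy (Or.inl (Walk.support_dropUntil_subset _ hzQ1 hy'))
  · intro y hy hyT
    rw [mem_support_append_iff] at hy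
    rcases hy with hy | hy
    · exact absurd (hqP y hy (Or.inr (Or.inr hyT)) ▸ hyT) hzT
    · exact hm1 y (Walk.support_dropUntil_subset _ hzQ1 hy) hyT
  · intro y hy hyT
    rw [support_cons, List.mem_cons] at hy
    rcases hy with rfl | hy
    · exact absurd hyT hvT
    · exact hm2 y hy hyT
  · intro y hy hy'
    rw [mem_support_append_iff] at hy
    rw [support_cons, List.mem_cons] at hy'
    rcases hy' with rfl | hy'
    · rcases hy with hy | hy
      · rfl
      · exact absurd (Walk.support_dropUntil_subset _ hzQ1 hy) hv1
    · rcases hy with hy | hy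
      · -- y ∈ q and y ∈ Q2 : y = z, then z ∈ Q1 ∩ Q2 so z = w, contradiction
        have hyz := hqP y hy (Or.inr (Or.inl hy'))
        subst hyz
        exact absurd (hint y hzQ1 hy') hzw
      · -- y ∈ dr ⊆ Q1 and y ∈ Q2 : y = w, but w ∉ dr
        have := hint y (Walk.support_dropUntil_subset _ hzQ1 hy) hy'
        subst this
        exact absurd hy hwdr

lemma hasFan (hconn : ∀ w : V, (G.induce ({w}ᶜ : Set V)).Connected)
    (T : Finset V) (hT : 2 ≤ T.card) :
    ∀ n : ℕ, ∀ v, v ∉ T → (∃ t ∈ T, ∃ p : G.Walk v t, p.length ≤ n) → HasFan G T v := by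
  intro n
  induction n with
  | zero =>
    rintro v hv ⟨t, ht, p, hp⟩
    exact absurd (Walk.eq_of_length_eq_zero (Nat.le_zero.mp hp) ▸ ht) hv
  | succ n ih =>
    rintro v hv ⟨t, ht, p, hp⟩
    by_cases hle : p.length ≤ n
    · exact ih v hv ⟨t, ht, p, hle⟩
    cases p with
    | nil => exact absurd (ht) hv
    | @cons _ w _ h p' =>
      have hp' : p'.length ≤ n := by
        rw [Walk.length_cons] at hp; omega
      have hvw : v ≠ w := h.ne
      by_cases hwT : w ∈ T
      · -- base construction: v adjacent to w ∈ T
        obtain ⟨t2, ht2, ht2w⟩ := Finset.exists_mem_ne (s := T) (by omega) w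
        obtain ⟨q0, hq0, hq0w⟩ := exists_path_avoiding hconn w v t2 hvw ht2w
        obtain ⟨z, q, hzT, hfirst, hsub, hqpath⟩ :=
          exists_prefix_first_hit q0 (· ∈ T) ht2
        have hqw : w ∉ q.support := fun hc => hq0w (hsub w hc)
        have hqT : ∀ y ∈ q.support, y ∈ T → y = z := fun y hy hyT => by
          by_contra hne; exact hfirst y hy hne hyT
        have hzw : z ≠ w := fun hc => hqw (hc ▸ q.end_mem_support)
        -- P1 = edge v-w, P2 = q
        refine ⟨w, z, hwT, hzT, hzw.symm, Walk.cons h Walk.nil, q,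
          ?_, hqpath hq0, ?_, hqT, ?_⟩
        · rw [Walk.cons_isPath_iff]
          exact ⟨Walk.IsPath.nil, by simp [hvw]⟩
        · intro y hy _
          simp only [support_cons, support_nil, List.mem_cons, List.mem_singleton] at hy
          rcases hy with rfl | rfl | h'
          · exact absurd ‹y ∈ T› hv
          · rfl
          · exact absurd h' List.not_mem_nil
        · intro y hy hy'
          simp only [support_cons, support_nil, List.mem_cons, List.mem_singleton] at hy
          rcases hy with rfl | rfl | h'
          · rfl
          · exact absurd hy' hqw
          · exact absurd h' List.not_mem_nil
      · -- recursive case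
        obtain ⟨x1, x2, hx1, hx2, h12, W1, W2, hW1, hW2, hm1, hm2, hint⟩ :=
          ih w hwT ⟨t, ht, p', hp'⟩
        by_cases hvW1 : v ∈ W1.support
        · exact fan_caseA hv hvw hx1 hx2 h12 W1 W2 hW1 hW2 hm1 hm2 hint hvW1
        by_cases hvW2 : v ∈ W2.support
        · exact fan_caseA hv hvw hx2 hx1 h12.symm W2 W1 hW2 hW1 hm2 hm1
            (fun z hz hz' => hint z hz' hz) hvW2
        -- v not on the fan from w
        obtain ⟨t2, ht2, ht2w⟩ := Finset.exists_mem_ne (s := T) (by omega) w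
        obtain ⟨q0, hq0, hq0w⟩ := exists_path_avoiding hconn w v t2 hvw ht2w
        obtain ⟨z, q, hPrz, hfirst, hsub, hqpath⟩ :=
          exists_prefix_first_hit q0
            (fun y => y ∈ W1.support ∨ y ∈ W2.support ∨ y ∈ T) (Or.inr (Or.inr ht2))
        have hqw : w ∉ q.support := fun hc => hq0w (hsub w hc)
        have hqP : ∀ y ∈ q.support,
            (y ∈ W1.support ∨ y ∈ W2.support ∨ y ∈ T) → y = z := fun y hy hyP => by
          by_contra hne; exact hfirst y hy hne hyP
        have hq : q.IsPath := hqpath hq0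
        by_cases hzT : z ∈ T
        · -- first hit is on T itself
          have hqT : ∀ y ∈ q.support, y ∈ T → y = z := fun y hy hyT =>
            hqP y hy (Or.inr (Or.inr hyT))
          by_cases hzx1 : z = x1
          · refine fan_caseB1 hv hzT hx2 (hzx1 ▸ h12) h q hq hqT W2 hW2 hm2 hvW2 ?_
            intro y hy hy'
            exact hqP y hy (Or.inr (Or.inl hy'))
          · refine fan_caseB1 hv hzT hx1 hzx1 h q hq hqT W1 hW1 hm1 hvW1 ?_
            intro y hy hy'
            exact hqP y hy (Or.inl hy')
        · rcases hPrz with hzW1 | hzW2 | hzT'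
          · exact fan_caseB2 hv hvw hzT hx1 hx2 h12 h q hq hqw W1 W2 hW1 hW2 hm1 hm2
              hint hvW1 hvW2 hzW1 hqP
          · exact fan_caseB2 hv hvw hzT hx2 hx1 h12.symm h q hq hqw W2 W1 hW2 hW1 hm2 hm1
              (fun y hy hy' => hint y hy' hy) hvW2 hvW1 hzW2
              (fun y hy hyP => hqP y hy (by tauto))
          · exact absurd hzT' hzT
      
end FanCases

/-- Two fully disjoint paths between vertex lists `L` and `L'`, with distinct endpoints
on both sides, meeting `L` and `L'` only at those endpoints. -/
def HasTwoPaths (G : SimpleGraph V) (L L' : List V) : Prop :=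
  ∃ (x1 x2 y1 y2 : V) (P1 : G.Walk x1 y1) (P2 : G.Walk x2 y2),
    x1 ∈ L ∧ x2 ∈ L ∧ y1 ∈ L' ∧ y2 ∈ L' ∧ x1 ≠ x2 ∧ y1 ≠ y2 ∧ P1.IsPath ∧ P2.IsPath ∧
    (∀ z ∈ P1.support, z ∈ L → z = x1) ∧ (∀ z ∈ P2.support, z ∈ L → z = x2) ∧
    (∀ z ∈ P1.support, z ∈ L' → z = y1) ∧ (∀ z ∈ P2.support, z ∈ L' → z = y2) ∧
    (∀ z ∈ P1.support, z ∉ P2.support)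

lemma exists_any_walk [DecidableEq V] [Fintype V] (hcard : 2 < Fintype.card V)
    (hconn : ∀ w : V, (G.induce ({w}ᶜ : Set V)).Connected) (x y : V) :
    ∃ p : G.Walk x y, p.IsPath := by
  by_cases hxy : x = y
  · subst hxy; exact ⟨Walk.nil, Walk.IsPath.nil⟩
  · have : ∃ w : V, w ∉ ({x, y} : Finset V) := by
      by_contra hcon
      push_neg at hcon
      have : (Finset.univ : Finset V) ⊆ {x, y} := fun w _ => hcon w
      have := Finset.card_le_card this
      have h2 : ({x, y} : Finset V).card ≤ 2 := Finset.card_insert_le _ _ |>.trans (by simp)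
      rw [Finset.card_univ] at this
      omega
    obtain ⟨w, hw⟩ := this
    simp only [Finset.mem_insert, Finset.mem_singleton, not_or] at hw
    obtain ⟨q, hq, -⟩ := exists_path_avoiding hconn w x y (Ne.symm hw.1) (Ne.symm hw.2)
    exact ⟨q, hq⟩

lemma dp_caseQ [DecidableEq V] {L L' : List V}
    (hdisj : ∀ z ∈ L, z ∉ L')
    {x1 x2 v y z : V} (hx1 : x1 ∈ L) (hx2 : x2 ∈ L) (hx12 : x1 ≠ x2)
    (hv : v ∈ L') (hy : y ∈ L') (hyv : y ≠ v)
    (Q1 : G.Walk x1 v) (Q2 : G.Walk x2 v) (hQ1 : Q1.IsPath) (hQ2 : Q2.IsPath)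
    (hQ1c : ∀ w ∈ Q1.support, w ∈ L → w = x1) (hQ2c : ∀ w ∈ Q2.support, w ∈ L → w = x2)
    (hQ1c' : ∀ w ∈ Q1.support, w ∈ L' → w = v) (hQ2c' : ∀ w ∈ Q2.support, w ∈ L' → w = v)
    (hQcom : ∀ w, w ∈ Q1.support → w ∈ Q2.support → w = v)
    (Sg : G.Walk z y) (hSg : Sg.IsPath) (hzv : z ≠ v)
    (hSgc' : ∀ w ∈ Sg.support, w ∈ L' → w = y)
    (hSgP : ∀ w ∈ Sg.support, (w ∈ L ∨ w ∈ Q1.support ∨ w ∈ Q2.support) → w = z)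
    (hzc : z ∉ L) (hzQ1 : z ∈ Q1.support) : HasTwoPaths G L L' := by
  set tk := Q1.takeUntil z hzQ1 with htk
  have htdi := takeUntil_dropUntil_inter hQ1 hzQ1
  have hvtk : v ∉ tk.support := fun hc =>
    hzv ((htdi v hc (Walk.end_mem_support _)).symm)
  refine ⟨x1, x2, y, v, tk.append Sg, Q2, hx1, hx2, hy, hv, hx12, hyv, ?_, hQ2, ?_, hQ2c,
    ?_, hQ2c', ?_⟩
  · refine IsPath.append' (hQ1.takeUntil hzQ1) hSg ?_
    intro w hw hw'
    exact hSgP w hw' (Or.inr (Or.inl (Walk.support_takeUntil_subset _ hzQ1 hw)))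
  · -- meets L only at x1
    intro w hw hwL
    rw [mem_support_append_iff] at hw
    rcases hw with hw | hw
    · exact hQ1c w (Walk.support_takeUntil_subset _ hzQ1 hw) hwL
    · exact absurd (hSgP w hw (Or.inl hwL) ▸ hwL) hzc
  · -- meets L' only at y
    intro w hw hwL'
    rw [mem_support_append_iff] at hw
    rcases hw with hw | hw
    · exfalso
      have := hQ1c' w (Walk.support_takeUntil_subset _ hzQ1 hw) hwL'
      subst this
      exact hvtk hw
    · exact hSgc' w hw hwL'
  · -- disjoint from Q2
    intro w hw hw'
    rw [mem_support_append_iff] at hw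
    rcases hw with hw | hw
    · have := hQcom w (Walk.support_takeUntil_subset _ hzQ1 hw) hw'
      subst this
      exact hvtk hw
    · have := hSgP w hw (Or.inr (Or.inr hw'))
      subst this
      exact hzv (hQcom w hzQ1 hw')

lemma cycle_support_card [DecidableEq V] {a : V} {c : G.Walk a a} (hc : c.IsCycle) :
    3 ≤ c.support.toFinset.card := by
  have h1 : c.support.tail.toFinset.card = c.support.tail.length :=
    List.toFinset_card_of_nodup hc.2
  have h2 : c.support.tail.length = c.length := by
    have := c.length_support
    have ht := List.length_tail (l := c.support)
    omega
  have h3 : c.support.tail.toFinset ⊆ c.support.toFinset := by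
    intro z hz
    rw [List.mem_toFinset] at hz ⊢
    exact List.mem_of_mem_tail hz
  have := Finset.card_le_card h3
  have := hc.three_le_length
  omega

lemma exists_twoPaths [DecidableEq V] [Fintype V] (hcard : 2 < Fintype.card V)
    (hconn : ∀ w : V, (G.induce ({w}ᶜ : Set V)).Connected)
    {a b : V} {c : G.Walk a a} {c' : G.Walk b b} (hc : c.IsCycle) (hc' : c'.IsCycle)
    (hdisj : ∀ z ∈ c.support, z ∉ c'.support) :
    HasTwoPaths G c.support c'.support := by
  set L := c.support with hL
  set L' := c'.support with hL'
  set T := c.support.toFinset with hT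
  have hTmem : ∀ z, z ∈ T ↔ z ∈ L := fun z => List.mem_toFinset
  have hTcard : 2 ≤ T.card := le_trans (by norm_num) (cycle_support_card hc)
  have hbL' : b ∈ L' := c'.start_mem_support
  have hbT : b ∉ T := fun hc2 => hdisj b ((hTmem b).mp hc2) hbL'
  -- get a fan from b to T
  obtain ⟨p0, -⟩ := exists_any_walk hcard hconn b a
  have hfan : HasFan G T b := hasFan hconn T hTcard p0.length b hbT
    ⟨a, (hTmem a).mpr c.start_mem_support, p0, le_refl _⟩
  obtain ⟨x1, x2, hx1, hx2, hx12, F1, F2, hF1, hF2, hm1, hm2, hFint⟩ := hfan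
  rw [hTmem] at hx1 hx2
  -- trim the reversed fan paths at their first hit of L'
  obtain ⟨y1, Q1, hy1, hfirst1, hsub1, hqp1⟩ :=
    exists_prefix_first_hit F1.reverse (· ∈ L') hbL'
  obtain ⟨y2, Q2, hy2, hfirst2, hsub2, hqp2⟩ :=
    exists_prefix_first_hit F2.reverse (· ∈ L') hbL'
  have hsub1' : ∀ w ∈ Q1.support, w ∈ F1.support := by
    intro w hw
    have := hsub1 w hw
    rwa [support_reverse, List.mem_reverse] at this
  have hsub2' : ∀ w ∈ Q2.support, w ∈ F2.support := by
    intro w hw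
    have := hsub2 w hw
    rwa [support_reverse, List.mem_reverse] at this
  have hQ1 : Q1.IsPath := hqp1 hF1.reverse
  have hQ2 : Q2.IsPath := hqp2 hF2.reverse
  have hQ1c : ∀ w ∈ Q1.support, w ∈ L → w = x1 := fun w hw hwL =>
    hm1 w (hsub1' w hw) ((hTmem w).mpr hwL)
  have hQ2c : ∀ w ∈ Q2.support, w ∈ L → w = x2 := fun w hw hwL =>
    hm2 w (hsub2' w hw) ((hTmem w).mpr hwL)
  have hQ1c' : ∀ w ∈ Q1.support, w ∈ L' → w = y1 := fun w hw hwL' => by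
    by_contra hne; exact hfirst1 w hw hne hwL'
  have hQ2c' : ∀ w ∈ Q2.support, w ∈ L' → w = y2 := fun w hw hwL' => by
    by_contra hne; exact hfirst2 w hw hne hwL'
  have hQcom : ∀ w, w ∈ Q1.support → w ∈ Q2.support → w = b := fun w hw hw' =>
    hFint w (hsub1' w hw) (hsub2' w hw')
  by_cases hyy : y1 = y2
  · -- both trimmed paths end at the same vertex, which must then be b
    subst hyy
    have hy1b : y1 = b := hQcom y1 Q1.end_mem_support Q2.end_mem_support
    subst hy1b
    clear hbT hfirst1 hfirst2 hsub1 hsub2 hm1 hm2 hFint hF1 hF2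
    -- second stage: a path from x1 to L' ∖ {b} avoiding b
    have h3 : 3 ≤ c'.support.toFinset.card := cycle_support_card hc'
    obtain ⟨t', ht', ht'b⟩ :=
      Finset.exists_mem_ne (s := c'.support.toFinset) (by omega) y1
    rw [List.mem_toFinset] at ht'
    have hx1b : x1 ≠ y1 := fun hc2 => hdisj x1 hx1 (hc2 ▸ hbL')
    obtain ⟨R, hR, hRb⟩ := exists_path_avoiding hconn y1 x1 t' hx1b ht'b
    obtain ⟨y, R', hy, hfirsty, hsuby, hRp'⟩ :=
      exists_prefix_first_hit R (· ∈ L') ht'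
    have hyb : y ≠ y1 := fun hc2 => hRb (hc2 ▸ hsuby y R'.end_mem_support)
    obtain ⟨z, Sg0, hPrz, hfirstz, hsubz, hSgp0⟩ :=
      exists_prefix_first_hit R'.reverse
        (fun w => w ∈ L ∨ w ∈ Q1.support ∨ w ∈ Q2.support) (Or.inl hx1)
    set Sg := Sg0.reverse with hSg
    have hSgsup : ∀ w ∈ Sg.support, w ∈ R'.support := by
      intro w hw
      rw [hSg, support_reverse, List.mem_reverse] at hw
      have := hsubz w hw
      rwa [support_reverse, List.mem_reverse] at this
    have hSgP : ∀ w ∈ Sg.support, (w ∈ L ∨ w ∈ Q1.support ∨ w ∈ Q2.support) → w = z := by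
      intro w hw hP
      rw [hSg, support_reverse, List.mem_reverse] at hw
      by_contra hne
      exact hfirstz w hw hne hP
    have hSgc' : ∀ w ∈ Sg.support, w ∈ L' → w = y := fun w hw hwL' => by
      by_contra hne
      exact hfirsty w (hSgsup w hw) hne hwL'
    have hSgpath : Sg.IsPath := (hSgp0 (hRp' hR).reverse).reverse
    have hzb : z ≠ y1 := fun hc2 => hRb (hc2 ▸ hsuby z (hSgsup z Sg.start_mem_support))
    by_cases hzL : z ∈ L
    · -- first (backwards) hit lands on the cycle c itself
      have hzy : z ≠ y := fun hc2 => hdisj z hzL (hc2 ▸ hy)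
      by_cases hzx1 : z = x1
      · refine ⟨z, x2, y, y1, Sg, Q2, hzL, hx2, hy, hbL', hzx1 ▸ hx12, hyb, hSgpath, hQ2,
          ?_, hQ2c, hSgc', hQ2c', ?_⟩
        · exact fun w hw hwL => hSgP w hw (Or.inl hwL)
        · intro w hw hw'
          have hwz := hSgP w hw (Or.inr (Or.inr hw'))
          rw [hwz] at hw'
          exact hx12 (hzx1 ▸ hQ2c z hw' hzL)
      · refine ⟨z, x1, y, y1, Sg, Q1, hzL, hx1, hy, hbL', hzx1, hyb, hSgpath, hQ1,
          ?_, hQ1c, hSgc', hQ1c', ?_⟩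
        · exact fun w hw hwL => hSgP w hw (Or.inl hwL)
        · intro w hw hw'
          have := hSgP w hw (Or.inr (Or.inl hw'))
          subst this
          exact hzx1 (hQ1c w hw' hzL)
    · rcases hPrz with hzL' | hzQ1 | hzQ2
      · exact absurd hzL' hzL
      · exact dp_caseQ hdisj hx1 hx2 hx12 hbL' hy hyb Q1 Q2 hQ1 hQ2 hQ1c hQ2c hQ1c' hQ2c'
          hQcom Sg hSgpath hzb hSgc' hSgP hzL hzQ1
      · exact dp_caseQ hdisj hx2 hx1 hx12.symm hbL' hy hyb Q2 Q1 hQ2 hQ1 hQ2c hQ1c hQ2c'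
          hQ1c' (fun w hw hw' => hQcom w hw' hw) Sg hSgpath hzb hSgc'
          (fun w hw hP => hSgP w hw (by tauto)) hzL hzQ2
  · -- the easy case: distinct endpoints already
    refine ⟨x1, x2, y1, y2, Q1, Q2, hx1, hx2, hy1, hy2, hx12, hyy, hQ1, hQ2,
      hQ1c, hQ2c, hQ1c', hQ2c', ?_⟩
    intro w hw hw'
    have hwb := hQcom w hw hw'
    subst hwb
    have h1 := hQ1c' w hw hbL'
    have h2 := hQ2c' w hw' hbL'
    exact hyy (h1 ▸ h2 ▸ rfl)

/-- A long arc between two distinct vertices of a cycle. -/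
lemma exists_arc [DecidableEq V] {a x1 x2 : V} {c : G.Walk a a} (hc : c.IsCycle)
    (h1 : x1 ∈ c.support) (h2 : x2 ∈ c.support) (h12 : x1 ≠ x2) :
    ∃ A : G.Walk x1 x2, A.IsPath ∧ (∀ z ∈ A.support, z ∈ c.support) ∧
      c.length ≤ 2 * A.length ∧ 1 ≤ A.length := by
  set cr := c.rotate _ h1 with hcr
  have hcrc : cr.IsCycle := hc.rotate h1
  have hx2r : x2 ∈ cr.support := (mem_support_rotate_iff c h1).mpr h2
  obtain ⟨htU, hdU, hsum, htl, hdl⟩ := cycle_arcs hcrc hx2r h12.symm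
  have hcl : cr.length = c.length := length_rotate' c h1
  have hsubr : ∀ z ∈ cr.support, z ∈ c.support := fun z hz =>
    (mem_support_rotate_iff c h1).mp hz
  by_cases hlen : c.length ≤ 2 * (cr.takeUntil x2 hx2r).length
  · refine ⟨cr.takeUntil x2 hx2r, htU, ?_, hlen, htl⟩
    exact fun z hz => hsubr z (Walk.support_takeUntil_subset _ hx2r hz)
  · refine ⟨(cr.dropUntil x2 hx2r).reverse, hdU.reverse, ?_, ?_, ?_⟩
    · intro z hz
      rw [support_reverse, List.mem_reverse] at hz
      exact hsubr z (Walk.support_dropUntil_subset _ hx2r hz)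
    · rw [length_reverse]; omega
    · rw [length_reverse]; exact hdl

lemma longest_cycles_intersect [DecidableEq V] [Fintype V] (hcard : 2 < Fintype.card V)
    (hconn : ∀ w : V, (G.induce ({w}ᶜ : Set V)).Connected)
    {a b : V} {c : G.Walk a a} {c' : G.Walk b b}
    (h1 : c.IsCycle) (h2 : c'.IsCycle) (hle : ∀ (u : V) (d : G.Walk u u), d.IsCycle → d.length ≤ c.length)
    (hlen : c.length = c'.length) :
    ∃ z, z ∈ c.support ∧ z ∈ c'.support := by
  by_contra hno
  push_neg at hno
  have hdisj : ∀ z ∈ c.support, z ∉ c'.support := hno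
  obtain ⟨x1, x2, y1, y2, P1, P2, hx1, hx2, hy1, hy2, hx12, hy12, hP1, hP2,
    hP1c, hP2c, hP1c', hP2c', hPdisj⟩ := exists_twoPaths hcard hconn h1 h2 hdisj
  obtain ⟨A, hA, hAsub, hAlen, hAlen1⟩ := exists_arc h1 hx1 hx2 hx12
  obtain ⟨A', hA', hA'sub, hA'len, hA'len1⟩ := exists_arc h2 hy2 hy1 hy12.symm
  have hP2len : 1 ≤ P2.length := by
    rcases Nat.eq_zero_or_pos P2.length with h | h
    · exact absurd (Walk.eq_of_length_eq_zero h ▸ hy2) (hdisj x2 hx2)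
    · exact h
  have hP1len : 1 ≤ P1.length := by
    rcases Nat.eq_zero_or_pos P1.length with h | h
    · exact absurd (Walk.eq_of_length_eq_zero h ▸ hy1) (hdisj x1 hx1)
    · exact h
  -- build the long cycle
  have hinner : (P2.append A').IsPath := by
    refine IsPath.append' hP2 hA' ?_
    intro z hz hz'
    exact hP2c' z hz (hA'sub z hz')
  have hppath : (A.append (P2.append A')).IsPath := by
    refine IsPath.append' hA hinner ?_
    intro z hz hz'
    rw [mem_support_append_iff] at hz'
    rcases hz' with hz' | hz'
    · exact (hP2c z hz' (hAsub z hz)).symm ▸ (hP2c z hz' (hAsub z hz))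
    · exact absurd (hA'sub z hz') (hdisj z (hAsub z hz))
  have hcyc : ((A.append (P2.append A')).append P1.reverse).IsCycle := by
    refine cycle_of_two_paths hppath hP1.reverse ?_ ?_ ?_
    · rw [length_append, length_append]; omega
    · rw [length_reverse]; omega
    · intro z hz hz'
      rw [support_reverse, List.mem_reverse] at hz'
      rw [mem_support_append_iff, mem_support_append_iff] at hz
      rcases hz with hz | hz | hz
      · exact Or.inl (hP1c z hz' (hAsub z hz))
      · exact absurd hz (hPdisj z hz')
      · exact Or.inr (hP1c' z hz' (hA'sub z hz))
  have := hle x1 _ hcyc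
  rw [length_append, length_append, length_append, length_reverse] at this
  omega


end Helpers

open SimpleGraph

/-- `c` is a longest cycle in `G`: it is a cycle and its length is at least
the length of every cycle in `G`. -/
def IsLongestCycle {V : Type*} (G : SimpleGraph V) {v : V} (c : G.Walk v v) : Prop :=
  c.IsCycle ∧ ∀ (u : V) (c' : G.Walk u u), c'.IsCycle → c'.length ≤ c.length

/-- `S` is an `A`–`B` separator in `G`: every path with one endpoint in `A` and the
other in `B` contains a vertex of `S`. -/
def IsSeparator {V : Type*} (G : SimpleGraph V) (A B S : Finset V) : Prop :=
  ∀ (a b : V), a ∈ A → b ∈ B → ∀ p : G.Walk a b, p.IsPath → ∃ s ∈ S, s ∈ p.support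

theorem separator_plus_intersection_is_transversal
    (V : Type) [Fintype V] [DecidableEq V] (G : SimpleGraph V)
    -- `G` is 2-connected:
    (hcard : 2 < Fintype.card V)
    (hconn : ∀ w : V, (G.induce ({w}ᶜ : Set V)).Connected)
    (u v : V) (c1 : G.Walk u u) (c2 : G.Walk v v)
    (h1 : IsLongestCycle G c1) (h2 : IsLongestCycle G c2)
    (S : Finset V)
    (hS : IsSeparator G (c1.support.toFinset \ c2.support.toFinset)
      (c2.support.toFinset \ c1.support.toFinset) S) :
    ∀ (w : V) (c : G.Walk w w), IsLongestCycle G c →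
      ∃ x ∈ S ∪ (c1.support.toFinset ∩ c2.support.toFinset), x ∈ c.support := by
  intro w c hlc
  by_contra hno
  push_neg at hno
  have hSc : ∀ x ∈ S, x ∉ c.support := fun x hx =>
    hno x (Finset.mem_union_left _ hx)
  have hIc : ∀ x, x ∈ c1.support → x ∈ c2.support → x ∉ c.support := fun x hx1 hx2 =>
    hno x (Finset.mem_union_right _
      (Finset.mem_inter.mpr ⟨List.mem_toFinset.mpr hx1, List.mem_toFinset.mpr hx2⟩))
  -- c meets c1
  have hlen1 : c.length = c1.length :=
    le_antisymm (h1.2 w c hlc.1) (hlc.2 u c1 h1.1)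
  have hlen2 : c.length = c2.length :=
    le_antisymm (h2.2 w c hlc.1) (hlc.2 v c2 h2.1)
  obtain ⟨p, hpc, hpc1⟩ :=
    longest_cycles_intersect hcard hconn hlc.1 h1.1 hlc.2 hlen1
  obtain ⟨q, hqc, hqc2⟩ :=
    longest_cycles_intersect hcard hconn hlc.1 h2.1 hlc.2 hlen2
  have hp2 : p ∉ c2.support := fun hcon => hIc p hpc1 hcon hpc
  have hq1 : q ∉ c1.support := fun hcon => hIc q hcon hqc2 hqc
  have hpq : p ≠ q := fun hcon => hq1 (hcon ▸ hpc1)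
  obtain ⟨A, hA, hAsub, -, -⟩ := exists_arc hlc.1 hpc hqc hpq
  obtain ⟨s, hsS, hs_sup⟩ := hS p q
    (Finset.mem_sdiff.mpr ⟨List.mem_toFinset.mpr hpc1, fun hcon => hp2 (List.mem_toFinset.mp hcon)⟩)
    (Finset.mem_sdiff.mpr ⟨List.mem_toFinset.mpr hqc2, fun hcon => hq1 (List.mem_toFinset.mp hcon)⟩)
    A hA
  exact hSc s hsS (hAsub s hs_sup)
end

section
/- Let G be a connected vertex-transitive finite simple graph on n ≥ 3 vertices and let k ≥ 1 be an integer such that every collection of k longest paths of G has a common vertex (i.e., for all longest paths P_1, …, P_k of G there exists a vertex lying on all of them). Then G contains a path P with |V(P)|^k ≥ n^{k−1}; in particular, G contains a path with at least n^{1−1/k} vertices. -/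
open SimpleGraph

/-- `p` is a longest path in `G`: it is a path and its length is at least
the length of every path in `G`. -/
def IsLongestPath {V : Type*} (G : SimpleGraph V) {a b : V} (p : G.Walk a b) : Prop :=
  p.IsPath ∧ ∀ (c d : V) (q : G.Walk c d), q.IsPath → q.length ≤ p.length

open Finset
open scoped Classical

noncomputable instance graphAutFintype {V : Type} [Fintype V] (G : SimpleGraph V) :
    Fintype (G ≃g G) :=
  Fintype.ofInjective (fun φ : G ≃g G => (φ : V ≃ V)) RelIso.toEquiv_injective

section cnt
variable {V : Type} [Fintype V] (G : SimpleGraph V)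

/-- fiber counts are constant -/
lemma count_fiber_const (htrans : ∀ u v : V, ∃ φ : G ≃g G, φ u = v) (u v w : V) :
    (univ.filter fun φ : G ≃g G => φ u = v).card
      = (univ.filter fun φ : G ≃g G => φ u = w).card := by
  obtain ⟨ψ, hψ⟩ := htrans v w
  refine Finset.card_bij' (fun φ _ => φ.trans ψ) (fun φ _ => φ.trans ψ.symm) ?_ ?_ ?_ ?_
  · intro φ hφ
    simp only [mem_filter, mem_univ, true_and] at hφ ⊢
    simp [RelIso.trans_apply, hφ, hψ]
  · intro φ hφ
    simp only [mem_filter, mem_univ, true_and] at hφ ⊢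
    simp only [RelIso.trans_apply] at hφ ⊢
    have := congrArg ψ.symm hφ
    rw [this, ← hψ, RelIso.symm_apply_apply]
  · intro φ _; ext x; simp
  · intro φ _; ext x; simp

lemma count_fiber (htrans : ∀ u v : V, ∃ φ : G ≃g G, φ u = v) (u v : V) :
    Fintype.card V * (univ.filter fun φ : G ≃g G => φ u = v).card
      = Fintype.card (G ≃g G) := by
  have h1 : Fintype.card (G ≃g G)
      = ∑ w : V, (univ.filter fun φ : G ≃g G => φ u = w).card := by
    rw [← Finset.card_univ]
    exact Finset.card_eq_sum_card_fiberwise (fun φ _ => Finset.mem_univ (φ u))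
  rw [h1, Finset.sum_congr rfl fun w _ => count_fiber_const G htrans u w v]
  simp [Finset.sum_const, Finset.card_univ, mul_comm]

lemma count_main (htrans : ∀ u v : V, ∃ φ : G ≃g G, φ u = v) (S T : Finset V) :
    Fintype.card V * ∑ φ : G ≃g G, (S ∩ T.image φ).card
      = S.card * T.card * Fintype.card (G ≃g G) := by
  have step1 : ∀ φ : G ≃g G, (S ∩ T.image φ).card
      = (T.filter fun u => φ u ∈ S).card := by
    intro φ
    rw [show S ∩ T.image φ = (T.filter fun u => φ u ∈ S).image φ by
      ext x
      simp only [Finset.mem_inter, Finset.mem_image, Finset.mem_filter]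
      constructor
      · rintro ⟨hx, u, hu, rfl⟩; exact ⟨u, ⟨hu, hx⟩, rfl⟩
      · rintro ⟨u, ⟨hu, hx⟩, rfl⟩; exact ⟨hx, u, hu, rfl⟩]
    exact Finset.card_image_of_injective _ φ.injective
  have step2 : ∀ (u : V), (univ.filter fun φ : G ≃g G => φ u ∈ S).card
      = ∑ v ∈ S, (univ.filter fun φ : G ≃g G => φ u = v).card := by
    intro u
    rw [Finset.card_eq_sum_card_fiberwise (s := univ.filter fun φ : G ≃g G => φ u ∈ S) (f := fun φ : G ≃g G => φ u) (t := S)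
      (fun φ hφ => (Finset.mem_filter.mp hφ).2)]
    refine Finset.sum_congr rfl fun v hv => ?_
    congr 1
    ext φ
    simp only [Finset.mem_filter, Finset.mem_univ, true_and, and_iff_right_iff_imp]
    rintro rfl; exact hv
  calc Fintype.card V * ∑ φ : G ≃g G, (S ∩ T.image φ).card
      = Fintype.card V * ∑ φ : G ≃g G, ∑ u ∈ T, (if φ u ∈ S then 1 else 0) := by
        simp only [step1, Finset.card_filter]
    _ = Fintype.card V * ∑ u ∈ T, (univ.filter fun φ : G ≃g G => φ u ∈ S).card := by
        rw [Finset.sum_comm]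
        refine congrArg _ (Finset.sum_congr rfl fun u _ => ?_)
        rw [Finset.card_filter]
    _ = ∑ u ∈ T, ∑ v ∈ S, Fintype.card V * (univ.filter fun φ : G ≃g G => φ u = v).card := by
        rw [Finset.mul_sum]
        refine Finset.sum_congr rfl fun u _ => ?_
        rw [step2, Finset.mul_sum]
    _ = S.card * T.card * Fintype.card (G ≃g G) := by
        simp only [count_fiber G htrans, Finset.sum_const, smul_eq_mul]
        ring

lemma count_exists (htrans : ∀ u v : V, ∃ φ : G ≃g G, φ u = v) (S T : Finset V) :
    ∃ φ : G ≃g G, Fintype.card V * (S ∩ T.image φ).card ≤ S.card * T.card := by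
  obtain ⟨φ₀, -, hφ₀⟩ := Finset.exists_min_image Finset.univ
    (fun φ : G ≃g G => (S ∩ T.image φ).card) ⟨RelIso.refl _, Finset.mem_univ _⟩
  refine ⟨φ₀, ?_⟩
  have hA : 0 < Fintype.card (G ≃g G) := Fintype.card_pos_iff.mpr ⟨RelIso.refl _⟩
  have key : Fintype.card (G ≃g G) * (Fintype.card V * (S ∩ T.image φ₀).card)
      ≤ Fintype.card (G ≃g G) * (S.card * T.card) := by
    calc Fintype.card (G ≃g G) * (Fintype.card V * (S ∩ T.image φ₀).card)
        = Fintype.card V * ∑ _φ : G ≃g G, (S ∩ T.image φ₀).card := by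
          simp [Finset.sum_const, Finset.card_univ]; ring
      _ ≤ Fintype.card V * ∑ φ : G ≃g G, (S ∩ T.image φ).card := by
          apply Nat.mul_le_mul_left
          exact Finset.sum_le_sum fun φ _ => hφ₀ φ (Finset.mem_univ φ)
      _ = Fintype.card (G ≃g G) * (S.card * T.card) := by
          rw [count_main G htrans S T]; ring
  exact Nat.le_of_mul_le_mul_left key hA
end cnt

section paths
variable {V : Type} [Fintype V] (G : SimpleGraph V)

lemma exists_longest_path [Nonempty V] :
    ∃ (a b : V) (p : G.Walk a b), IsLongestPath G p := by
  classical
  set P : ℕ → Prop := fun l => ∃ (a b : V) (p : G.Walk a b), p.IsPath ∧ p.length = l with hP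
  have hP0 : P 0 := by
    obtain ⟨v⟩ := ‹Nonempty V›
    exact ⟨v, v, SimpleGraph.Walk.nil, SimpleGraph.Walk.IsPath.nil, rfl⟩
  have hbound : ∀ l, P l → l ≤ Fintype.card V := by
    rintro l ⟨a, b, p, hp, rfl⟩
    exact le_of_lt hp.length_lt
  obtain ⟨a, b, p, hp, hlen⟩ := Nat.findGreatest_spec (P := P) (Nat.zero_le _) hP0
  refine ⟨a, b, p, hp, fun c d q hq => ?_⟩
  rw [hlen]
  exact Nat.le_findGreatest (hbound q.length ⟨c, d, q, hq, rfl⟩) ⟨c, d, q, hq, rfl⟩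

lemma IsLongestPath.map {a b : V} {p : G.Walk a b} (hp : IsLongestPath G p) (φ : G ≃g G) :
    IsLongestPath G (p.map φ.toHom) := by
  constructor
  · exact SimpleGraph.Walk.map_isPath_of_injective φ.injective hp.1
  · intro c d q hq
    rw [SimpleGraph.Walk.length_map]
    exact hp.2 c d q hq

/-- bundled longest paths -/
def LP : Type := {q : Σ a b : V, G.Walk a b // IsLongestPath G q.2.2}

lemma key_induction (htrans : ∀ u v : V, ∃ φ : G ≃g G, φ u = v) [Nonempty V]
    {a₀ b₀ : V} {p₀ : G.Walk a₀ b₀} (hp₀ : IsLongestPath G p₀) (j : ℕ) :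
    ∃ f : Fin (j+1) → LP G,
      Fintype.card V ^ j *
        (univ.filter fun x => ∀ i, x ∈ ((f i).1.2.2).support).card
      ≤ (p₀.length + 1) ^ (j+1) := by
  classical
  set m := p₀.length + 1 with hm
  have hT : (p₀.support.toFinset).card = m := by
    rw [List.toFinset_card_of_nodup hp₀.1.support_nodup, SimpleGraph.Walk.length_support]
  induction j with
  | zero =>
    refine ⟨fun _ => ⟨⟨a₀, b₀, p₀⟩, hp₀⟩, ?_⟩
    simp only [pow_zero, one_mul, zero_add, pow_one]
    rw [← hT]
    apply Finset.card_le_card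
    intro x hx
    rw [List.mem_toFinset]
    exact (Finset.mem_filter.mp hx).2 ⟨0, Nat.zero_lt_one⟩
  | succ j ih =>
    obtain ⟨f, hf⟩ := ih
    set S := (univ.filter fun x => ∀ i, x ∈ ((f i).1.2.2).support) with hS
    obtain ⟨φ, hφ⟩ := count_exists G htrans S p₀.support.toFinset
    set q := p₀.map φ.toHom with hq
    have hsupp : q.support.toFinset = p₀.support.toFinset.image φ := by
      ext x; simp [hq, SimpleGraph.Walk.support_map]
    refine ⟨Fin.cons ⟨⟨φ a₀, φ b₀, q⟩, hp₀.map G φ⟩ f, ?_⟩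
    have hset : (univ.filter fun x =>
        ∀ i : Fin (j+2), x ∈ (((Fin.cons ⟨⟨φ a₀, φ b₀, q⟩, hp₀.map G φ⟩ f : Fin (j+2) → LP G) i).1.2.2).support)
        = S ∩ p₀.support.toFinset.image φ := by
      ext x
      rw [← hsupp]
      simp only [Finset.mem_inter, Finset.mem_filter, Finset.mem_univ, true_and, hS,
        List.mem_toFinset, Fin.forall_fin_succ, Fin.cons_zero, Fin.cons_succ]
      tauto
    rw [hset]
    calc Fintype.card V ^ (j+1) * (S ∩ p₀.support.toFinset.image φ).card
        = Fintype.card V ^ j * (Fintype.card V * (S ∩ p₀.support.toFinset.image φ).card) := by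
          ring
      _ ≤ Fintype.card V ^ j * (S.card * m) := by
          apply Nat.mul_le_mul_left
          rw [← hT]; exact hφ
      _ = (Fintype.card V ^ j * S.card) * m := by ring
      _ ≤ m ^ (j+1) * m := Nat.mul_le_mul_right m hf
      _ = m ^ (j+2) := by ring

end paths

theorem paths_common_vertex_lower_bound
    (V : Type) [Fintype V] (G : SimpleGraph V)
    (hconn : G.Connected) (htrans : ∀ u v : V, ∃ φ : G ≃g G, φ u = v)
    (hn : 3 ≤ Fintype.card V)
    (k : ℕ) (hk : 1 ≤ k)
    -- every collection of `k` longest paths of `G` has a common vertex: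
    (h : ∀ (a b : Fin k → V) (P : ∀ i, G.Walk (a i) (b i)),
      (∀ i, IsLongestPath G (P i)) → ∃ x : V, ∀ i, x ∈ (P i).support) :
    ∃ (a b : V) (p : G.Walk a b), p.IsPath ∧
      Fintype.card V ^ (k - 1) ≤ (p.length + 1) ^ k ∧
      (Fintype.card V : ℝ) ^ ((1 : ℝ) - 1 / (k : ℝ)) ≤ ((p.length : ℝ) + 1) := by
  classical
  have hVne : Nonempty V := Fintype.card_pos_iff.mp (by omega)
  obtain ⟨a₀, b₀, p₀, hp₀⟩ := exists_longest_path G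
  obtain ⟨k', rfl⟩ : ∃ k', k = k' + 1 := ⟨k - 1, by omega⟩
  obtain ⟨f, hf⟩ := key_induction G htrans hp₀ k'
  obtain ⟨x, hx⟩ := h (fun i => (f i).1.1) (fun i => (f i).1.2.1) (fun i => (f i).1.2.2)
    (fun i => (f i).2)
  have hone : 1 ≤ (univ.filter fun y => ∀ i, y ∈ ((f i).1.2.2).support).card :=
    Finset.card_pos.mpr ⟨x, Finset.mem_filter.mpr ⟨Finset.mem_univ x, hx⟩⟩
  have hnat : Fintype.card V ^ k' ≤ (p₀.length + 1) ^ (k' + 1) := by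
    calc Fintype.card V ^ k'
        = Fintype.card V ^ k' * 1 := (mul_one _).symm
      _ ≤ Fintype.card V ^ k' *
            (univ.filter fun y => ∀ i, y ∈ ((f i).1.2.2).support).card :=
          Nat.mul_le_mul_left _ hone
      _ ≤ (p₀.length + 1) ^ (k' + 1) := hf
  refine ⟨a₀, b₀, p₀, hp₀.1, by simpa using hnat, ?_⟩
  -- real part
  have hn0 : (0 : ℝ) < (Fintype.card V : ℝ) := by
    have : 0 < Fintype.card V := by omega
    exact_mod_cast this
  have hm0 : (0 : ℝ) < ((p₀.length : ℝ) + 1) := by positivity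
  have hK : (0 : ℝ) < ((k' : ℝ) + 1) := by positivity
  have hcast : (Fintype.card V : ℝ) ^ (k' : ℕ) ≤ ((p₀.length : ℝ) + 1) ^ (k' + 1 : ℕ) := by
    exact_mod_cast hnat
  have hr := Real.rpow_le_rpow (by positivity)
    hcast (by positivity : (0 : ℝ) ≤ 1 / ((k' : ℝ) + 1))
  rw [← Real.rpow_natCast (Fintype.card V : ℝ) k',
      ← Real.rpow_natCast ((p₀.length : ℝ) + 1) (k' + 1),
      ← Real.rpow_mul (le_of_lt hn0), ← Real.rpow_mul (le_of_lt hm0)] at hr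
  have hexp1 : ((k' : ℝ)) * (1 / ((k' : ℝ) + 1)) = (1 : ℝ) - 1 / (((k' + 1 : ℕ) : ℝ)) := by
    push_cast
    field_simp
    ring
  have hexp2 : (((k' + 1 : ℕ) : ℝ)) * (1 / ((k' : ℝ) + 1)) = 1 := by
    push_cast
    field_simp
  rw [show (((k' : ℕ) : ℝ)) = (k' : ℝ) from rfl] at hr
  rw [hexp2, Real.rpow_one] at hr
  calc (Fintype.card V : ℝ) ^ ((1 : ℝ) - 1 / (((k' + 1 : ℕ) : ℝ)))
      = (Fintype.card V : ℝ) ^ ((k' : ℝ) * (1 / ((k' : ℝ) + 1))) := by rw [hexp1]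
    _ ≤ ((p₀.length : ℝ) + 1) := hr
end

section
/- Let G be a connected vertex-transitive finite simple graph on n ≥ 3 vertices and let k ≥ 1 be an integer such that every collection of k longest cycles of G has a common vertex (i.e., for all longest cycles C_1, …, C_k of G there exists a vertex lying on all of them). Then G contains a cycle C with length(C)^k ≥ n^{k−1}; in particular, G contains a cycle of length at least n^{1−1/k}. -/
set_option linter.unusedSectionVars false
set_option linter.unusedVariables false
set_option maxHeartbeats 1000000

open SimpleGraph Finset MulAction

section Helpers

variable {V : Type} [Fintype V] [DecidableEq V] (G : SimpleGraph V)

def autSub : Subgroup (Equiv.Perm V) where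
  carrier := {g | ∀ x y, G.Adj (g x) (g y) ↔ G.Adj x y}
  one_mem' := by simp
  mul_mem' := by
    intro a b ha hb x y
    simp only [Equiv.Perm.mul_apply]
    rw [ha, hb]
  inv_mem' := by
    intro g hg x y
    conv_rhs => rw [← (by exact Equiv.apply_symm_apply g x : g (g⁻¹ x) = x),
      ← (by exact Equiv.apply_symm_apply g y : g (g⁻¹ y) = y), hg]

variable {G}

lemma mem_autSub_of_iso (φ : G ≃g G) : (φ.toEquiv : Equiv.Perm V) ∈ autSub G :=
  fun x y => φ.map_rel_iff

noncomputable instance : Fintype (autSub G) := Fintype.ofFinite _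

lemma autSub_smul (g : autSub G) (v : V) : g • v = (g : Equiv.Perm V) v := rfl

/-- A member of `autSub G` as a graph homomorphism. -/
def autHom (g : autSub G) : G →g G :=
  ⟨(g : Equiv.Perm V), fun {a b} h => (g.2 a b).2 h⟩

lemma autHom_apply (g : autSub G) (v : V) : autHom g v = (g : Equiv.Perm V) v := rfl

lemma autSub_pretransitive (htrans : ∀ u v : V, ∃ φ : G ≃g G, φ u = v) :
    IsPretransitive (autSub G) V := by
  constructor
  intro u v
  obtain ⟨φ, hφ⟩ := htrans u v
  exact ⟨⟨φ.toEquiv, mem_autSub_of_iso φ⟩, hφ⟩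

lemma card_fiber (htrans : ∀ u v : V, ∃ φ : G ≃g G, φ u = v) (a b : V) :
    (univ.filter (fun g : autSub G => g • a = b)).card * Fintype.card V
      = Fintype.card (autSub G) := by
  classical
  haveI := autSub_pretransitive htrans
  obtain ⟨g₀, hg₀⟩ := exists_smul_eq (autSub G) a b
  have horb : Fintype.card (orbit (autSub G) a) = Fintype.card V := by
    have : orbit (autSub G) a = Set.univ := orbit_eq_univ _ a
    rw [← Set.toFinset_card]
    simp [this]
  have hstab : (univ.filter (fun g : autSub G => g • a = a)).card
      = Fintype.card (stabilizer (autSub G) a) := by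
    rw [← Fintype.card_subtype]
    exact Fintype.card_congr (Equiv.subtypeEquivRight (fun g => (mem_stabilizer_iff).symm))
  have hbij : (univ.filter (fun g : autSub G => g • a = b)).card
      = (univ.filter (fun g : autSub G => g • a = a)).card := by
    apply Finset.card_bij' (fun g _ => g₀⁻¹ * g) (fun g _ => g₀ * g)
    · intro g hg
      simp only [mem_filter, mem_univ, true_and] at hg ⊢
      rw [mul_smul, hg, ← hg₀, inv_smul_smul]
    · intro g hg
      simp only [mem_filter, mem_univ, true_and] at hg ⊢
      rw [mul_smul, hg, hg₀]
    · intro g _; group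
    · intro g _; group
  rw [hbij, hstab, ← horb, mul_comm]
  exact card_orbit_mul_card_stabilizer_eq_card_group _ a

lemma exists_small_intersection (htrans : ∀ u v : V, ∃ φ : G ≃g G, φ u = v)
    (A B : Finset V) :
    ∃ g : autSub G, (A.image (fun x => (g : Equiv.Perm V) x) ∩ B).card * Fintype.card V
      ≤ A.card * B.card := by
  classical
  set n := Fintype.card V
  set N := Fintype.card (autSub G)
  have hN : 0 < N := Fintype.card_pos
  have hcard : ∀ g : autSub G,
      (A.image (fun x => (g : Equiv.Perm V) x) ∩ B).card
        = (A.filter (fun a => (g : Equiv.Perm V) a ∈ B)).card := by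
    intro g
    refine (Finset.card_bij (fun a _ => (g : Equiv.Perm V) a) ?_ ?_ ?_).symm
    · intro a ha
      simp only [mem_filter] at ha
      simp only [mem_inter, mem_image]
      exact ⟨⟨a, ha.1, rfl⟩, ha.2⟩
    · intro a ha a' ha' hh
      exact (g : Equiv.Perm V).injective hh
    · intro b hb
      simp only [mem_inter, mem_image] at hb
      obtain ⟨⟨a, ha, rfl⟩, hb2⟩ := hb
      exact ⟨a, Finset.mem_filter.2 ⟨ha, hb2⟩, rfl⟩
  have hsum : (∑ g : autSub G,
      (A.image (fun x => (g : Equiv.Perm V) x) ∩ B).card) * n = A.card * B.card * N := by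
    have : ∀ g : autSub G, (A.filter (fun a => (g : Equiv.Perm V) a ∈ B)).card
        = ∑ a ∈ A, ∑ b ∈ B, if g • a = b then 1 else 0 := by
      intro g
      rw [Finset.card_filter]
      refine Finset.sum_congr rfl (fun a _ => ?_)
      rw [eq_comm, Finset.sum_ite_eq]
      simp [autSub_smul]
    simp_rw [hcard, this]
    rw [Finset.sum_comm]
    rw [Finset.sum_mul]
    have : ∀ a ∈ A, (∑ g : autSub G, ∑ b ∈ B, if g • a = b then 1 else 0) * n
        = B.card * N := by
      intro a _
      rw [Finset.sum_comm, Finset.sum_mul]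
      have : ∀ b ∈ B, (∑ g : autSub G, if g • a = b then 1 else 0) * n = N := by
        intro b _
        rw [← Finset.card_filter]
        exact card_fiber htrans a b
      rw [Finset.sum_congr rfl this, Finset.sum_const, smul_eq_mul]
    rw [Finset.sum_congr rfl this, Finset.sum_const, smul_eq_mul, ← mul_assoc]
  by_contra hcon
  push_neg at hcon
  have : ∀ g : autSub G, A.card * B.card + 1
      ≤ (A.image (fun x => (g : Equiv.Perm V) x) ∩ B).card * n := fun g => hcon g
  have hge : N * (A.card * B.card + 1) ≤ A.card * B.card * N := by
    calc N * (A.card * B.card + 1)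
        = ∑ _g : autSub G, (A.card * B.card + 1) := by
          rw [Finset.sum_const, smul_eq_mul, Finset.card_univ]
      _ ≤ ∑ g : autSub G, (A.image (fun x => (g : Equiv.Perm V) x) ∩ B).card * n :=
          Finset.sum_le_sum (fun g _ => this g)
      _ = (∑ g : autSub G, (A.image (fun x => (g : Equiv.Perm V) x) ∩ B).card) * n :=
          (Finset.sum_mul _ _ _).symm
      _ = A.card * B.card * N := hsum
  nlinarith

lemma degree_eq_of_iso' [DecidableRel G.Adj] (φ : G ≃g G) (v : V) :
    G.degree (φ v) = G.degree v := by
  rw [← card_neighborSet_eq_degree, ← card_neighborSet_eq_degree]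
  exact (Fintype.card_congr (φ.mapNeighborSet v)).symm

lemma exists_cycle_of_vt (hconn : G.Connected)
    (htrans : ∀ u v : V, ∃ φ : G ≃g G, φ u = v) (hn : 3 ≤ Fintype.card V) :
    ∃ (v : V) (c : G.Walk v v), c.IsCycle := by
  classical
  by_contra hcon
  push_neg at hcon
  have hac : G.IsAcyclic := fun v c hc => hcon v c hc
  have htree : G.IsTree := ⟨hconn, hac⟩
  have hcard := htree.card_edgeFinset
  have hne : Nonempty V := hconn.nonempty
  obtain ⟨v0⟩ := hne
  have hreg : ∀ v, G.degree v = G.degree v0 := by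
    intro v
    obtain ⟨φ, hφ⟩ := htrans v0 v
    rw [← hφ]; exact degree_eq_of_iso' φ v0
  have hsum := G.sum_degrees_eq_twice_card_edges
  rw [Finset.sum_congr rfl (fun v _ => hreg v), Finset.sum_const, Finset.card_univ,
    smul_eq_mul] at hsum
  have h2 : Fintype.card V * G.degree v0 = 2 * Fintype.card V - 2 := by omega
  rcases Nat.lt_or_ge (G.degree v0) 2 with hd | hd
  · interval_cases hdeg : G.degree v0 <;> omega
  · nlinarith [hd, hn]

lemma cycle_length_le_card' {v : V} {c : G.Walk v v} (hc : c.IsCycle) :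
    c.length ≤ Fintype.card V := by
  have h1 : c.support.tail.length = c.length := by
    simp [SimpleGraph.Walk.length_support c]
  calc c.length = c.support.tail.length := h1.symm
    _ ≤ Fintype.card V := List.Nodup.length_le_card hc.support_nodup

lemma cycle_support_toFinset_card {v : V} {c : G.Walk v v} (hc : c.IsCycle) :
    c.support.toFinset.card = c.length := by
  cases c with
  | nil => exact absurd rfl hc.ne_nil
  | cons h p =>
    have hnod : p.support.Nodup := by
      have := hc.support_nodup
      simpa using this
    have hv : v ∈ p.support := p.end_mem_support
    simp only [Walk.support_cons, List.toFinset_cons, Walk.length_cons]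
    rw [Finset.card_insert_of_mem (List.mem_toFinset.2 hv),
      List.toFinset_card_of_nodup hnod, Walk.length_support]

end Helpers

section Helpers2

variable {V : Type} [Fintype V] [DecidableEq V] {G : SimpleGraph V}

lemma exists_longest_cycle' (hex : ∃ (v : V) (c : G.Walk v v), c.IsCycle) :
    ∃ (v : V) (c : G.Walk v v), IsLongestCycle G c := by
  classical
  set T := (Finset.range (Fintype.card V + 1)).filter
    (fun n => ∃ (v : V) (c : G.Walk v v), c.IsCycle ∧ c.length = n) with hT
  obtain ⟨v, c, hc⟩ := hex
  have hmem : c.length ∈ T := by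
    simp only [hT, Finset.mem_filter, Finset.mem_range]
    exact ⟨Nat.lt_succ_of_le (cycle_length_le_card' hc), v, c, hc, rfl⟩
  have hTne : T.Nonempty := ⟨_, hmem⟩
  obtain ⟨hL1, u, c', hc', hlen⟩ := Finset.mem_filter.1 (T.max'_mem hTne)
  refine ⟨u, c', hc', fun w c'' hc'' => ?_⟩
  rw [hlen]
  refine Finset.le_max' T _ ?_
  simp only [hT, Finset.mem_filter, Finset.mem_range]
  exact ⟨Nat.lt_succ_of_le (cycle_length_le_card' hc''), w, c'', hc'', rfl⟩

/-- mapping a longest cycle by an automorphism gives a longest cycle. -/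
lemma isLongestCycle_map (g : autSub G) {v : V} {c : G.Walk v v}
    (hc : IsLongestCycle G c) :
    IsLongestCycle G (c.map (autHom g)) := by
  constructor
  · exact hc.1.map ((g : Equiv.Perm V).injective)
  · intro u c' hc'
    rw [Walk.length_map]
    exact hc.2 u c' hc'

end Helpers2

theorem cycles_common_vertex_lower_bound
    (V : Type) [Fintype V] (G : SimpleGraph V)
    (hconn : G.Connected) (htrans : ∀ u v : V, ∃ φ : G ≃g G, φ u = v)
    (hn : 3 ≤ Fintype.card V)
    (k : ℕ) (hk : 1 ≤ k)
    -- every collection of `k` longest cycles of `G` has a common vertex: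
    (h : ∀ (a : Fin k → V) (C : ∀ i, G.Walk (a i) (a i)),
      (∀ i, IsLongestCycle G (C i)) → ∃ x : V, ∀ i, x ∈ (C i).support) :
    ∃ (v : V) (c : G.Walk v v), c.IsCycle ∧
      Fintype.card V ^ (k - 1) ≤ c.length ^ k ∧
      (Fintype.card V : ℝ) ^ ((1 : ℝ) - 1 / (k : ℝ)) ≤ (c.length : ℝ) := by
  classical
  obtain ⟨v₀, c₀, hc₀⟩ := exists_longest_cycle' (exists_cycle_of_vt hconn htrans hn)
  set n := Fintype.card V with hn'
  set L := c₀.length with hL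
  set A := c₀.support.toFinset with hA
  have hAcard : A.card = L := cycle_support_toFinset_card hc₀.1
  -- key induction
  have key : ∀ j, 1 ≤ j → j ≤ k → ∃ D : Fin j → Σ v : V, G.Walk v v,
      (∀ i, IsLongestCycle G (D i).2) ∧
      (univ.filter fun x => ∀ i, x ∈ ((D i).2).support).card * n ^ (j-1) ≤ L ^ j := by
    intro j hj
    induction j, hj using Nat.le_induction with
    | base =>
      intro _
      refine ⟨fun _ => ⟨v₀, c₀⟩, fun _ => hc₀, ?_⟩
      have hfil : (univ.filter fun x => ∀ _ : Fin 1, x ∈ c₀.support) = A := by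
        ext x
        simp [hA, List.mem_toFinset]
      rw [hfil, hAcard]
      simp
    | succ j hj ih =>
      intro hjk
      obtain ⟨D, hlong, hbound⟩ := ih (le_trans (Nat.le_succ j) hjk)
      set S := (univ.filter fun x => ∀ i, x ∈ ((D i).2).support) with hS
      obtain ⟨g, hg⟩ := exists_small_intersection htrans A S
      set cg := c₀.map (autHom g) with hcg
      set D' : Fin (j+1) → Σ v : V, G.Walk v v :=
        Fin.cases (motive := fun _ => Σ v : V, G.Walk v v) ⟨(autHom g) v₀, cg⟩ D with hD'
      refine ⟨D', ?_, ?_⟩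
      · intro i
        rcases Fin.eq_zero_or_eq_succ i with rfl | ⟨i', rfl⟩
        · exact isLongestCycle_map g hc₀
        · exact hlong i'
      · have hfil : (univ.filter fun x => ∀ i : Fin (j+1),
            x ∈ ((D' i).2).support)
            = (A.image (fun x => (g : Equiv.Perm V) x)) ∩ S := by
          ext x
          simp only [mem_filter, mem_univ, true_and, mem_inter, mem_image,
            Fin.forall_fin_succ, hD', Fin.cases_zero, Fin.cases_succ, hS, hA,
            List.mem_toFinset, hcg, Walk.support_map, List.mem_map]
          rw [hD']
          simp only [Fin.cases_zero, Fin.cases_succ, hcg, Walk.support_map,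
            List.mem_map, autHom_apply]
          simp [Walk.support_map, autHom_apply]
          intro _
          erw [Walk.support_map, List.mem_map]
          rfl
        rw [hfil]
        have hj1 : j + 1 - 1 = j := rfl
        rw [hj1]
        have hj2 : j - 1 + 1 = j := Nat.succ_pred_eq_of_pos hj
        have hnj : n ^ j = n * n ^ (j - 1) := by
          conv_lhs => rw [← hj2]
          rw [pow_succ]; ring
        calc ((A.image (fun x => (g : Equiv.Perm V) x)) ∩ S).card * n ^ j
            = (((A.image (fun x => (g : Equiv.Perm V) x)) ∩ S).card * n) * n ^ (j-1) := by
              rw [hnj]; ring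
          _ ≤ (A.card * S.card) * n ^ (j-1) := Nat.mul_le_mul_right _ hg
          _ = L * (S.card * n ^ (j-1)) := by rw [hAcard]; ring
          _ ≤ L * L ^ j := Nat.mul_le_mul_left _ hbound
          _ = L ^ (j+1) := by rw [pow_succ]; ring
  obtain ⟨D, hlong, hbound⟩ := key k hk le_rfl
  obtain ⟨x, hx⟩ := h (fun i => (D i).1) (fun i => (D i).2) hlong
  have hxS : x ∈ (univ.filter fun x => ∀ i, x ∈ ((D i).2).support) := by
    simp only [mem_filter, mem_univ, true_and]; exact hx
  have hcard1 : 1 ≤ (univ.filter fun x => ∀ i, x ∈ ((D i).2).support).card :=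
    Finset.card_pos.2 ⟨x, hxS⟩
  have hmain : n ^ (k-1) ≤ L ^ k := by
    calc n ^ (k-1) = 1 * n ^ (k-1) := (one_mul _).symm
      _ ≤ (univ.filter fun x => ∀ i, x ∈ ((D i).2).support).card * n ^ (k-1) :=
          Nat.mul_le_mul_right _ hcard1
      _ ≤ L ^ k := hbound
  refine ⟨v₀, c₀, hc₀.1, hmain, ?_⟩
  -- real part
  have hk0 : (k : ℝ) ≠ 0 := Nat.cast_ne_zero.2 (by omega)
  have hkpos : (0:ℝ) < k := Nat.cast_pos.2 (by omega)
  have hnn : (0:ℝ) ≤ (n:ℝ) := Nat.cast_nonneg n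
  have hLn : (0:ℝ) ≤ (L:ℝ) := Nat.cast_nonneg L
  have hcast : ((n:ℝ)) ^ (k-1 : ℕ) ≤ ((L:ℝ)) ^ k := by
    exact_mod_cast hmain
  have he : (1 : ℝ) - 1 / (k : ℝ) = ((k-1 : ℕ) : ℝ) * (1 / (k:ℝ)) := by
    rw [Nat.cast_sub hk]
    field_simp
    simp
  rw [he]
  calc (n:ℝ) ^ (((k-1 : ℕ) : ℝ) * (1 / (k:ℝ)))
      = ((n:ℝ) ^ ((k-1 : ℕ) : ℝ)) ^ (1 / (k:ℝ)) := Real.rpow_mul hnn _ _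
    _ = ((n:ℝ) ^ (k-1 : ℕ)) ^ (1 / (k:ℝ)) := by rw [Real.rpow_natCast]
    _ ≤ ((L:ℝ) ^ k) ^ (1 / (k:ℝ)) := by
        apply Real.rpow_le_rpow (by positivity) hcast (by positivity)
    _ = ((L:ℝ) ^ ((k:ℕ) : ℝ)) ^ (1 / (k:ℝ)) := by rw [Real.rpow_natCast]
    _ = (L:ℝ) ^ (((k:ℕ) : ℝ) * (1 / (k:ℝ))) := (Real.rpow_mul hLn _ _).symm
    _ = (L:ℝ) ^ (1:ℝ) := by rw [mul_one_div, div_self hk0]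
    _ = (L:ℝ) := Real.rpow_one _
end
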